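/- Fix integers n ≥ 1 and N ≥ n+2, and let K ⊂ ℝⁿ be a convex body containing the origin in its interior. Then G_{n,N}(𝟙_K) = min over polytopes P ⊆ K with at most N vertices of vol_n(K \ P), where 𝟙_K is the characteristic function of K. -/

import Mathlib

open MeasureTheory Filter Set Metric

noncomputable section

/-- `n`-dimensional Euclidean space `ℝⁿ`. -/
abbrev Eucl (n : ℕ) : Type := EuclideanSpace ℝ (Fin n)

/-- The epigraph `epi(ψ) = {(x,t) : t ≥ ψ(x)}` of an extended-real-valued function. -/
def epi {n : ℕ} (ψ : Eucl n → EReal) : Set (Eucl n × ℝ) :=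
  {q : Eucl n × ℝ | ψ q.1 ≤ (q.2 : EReal)}

/-- `expNeg t = exp (−t)`, extended so that `exp (−(+∞)) = 0`
(the value at `⊥` is irrelevant: functions in `ℝ ∪ {+∞}` never take the value `⊥`). -/
def expNeg (t : EReal) : ℝ :=
  if t = ⊤ ∨ t = ⊥ then 0 else Real.exp (-t.toReal)

/-- `negLog y = − log y` for `y > 0`, and `+∞` otherwise; for `f = exp(−ψ) ≥ 0`
this recovers `ψ` from `f`. -/
def negLog (y : ℝ) : EReal :=
  if y ≤ 0 then ⊤ else ((-Real.log y : ℝ) : EReal)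

/-- Membership in the class `LC_c(ℝⁿ)`: `f = exp(−ψ)` for a convex (as a function into
`ℝ ∪ {+∞}`, encoded by convexity of the epigraph) lower semicontinuous coercive function `ψ`,
`ψ ≢ +∞`, the origin lies in `dom ψ`, and `dom ψ` is not contained in a hyperplane
(its affine span is everything). -/
def MemLCc {n : ℕ} (f : Eucl n → ℝ) : Prop :=
  ∃ ψ : Eucl n → EReal,
    (∀ x, ψ x ≠ ⊥) ∧
    Convex ℝ (epi ψ) ∧
    LowerSemicontinuous ψ ∧
    Tendsto ψ (cocompact (Eucl n)) (nhds ⊤) ∧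
    (∃ x, ψ x ≠ ⊤) ∧
    ψ 0 ≠ ⊤ ∧
    affineSpan ℝ {x : Eucl n | ψ x ≠ ⊤} = ⊤ ∧
    (∀ x, f x = expNeg (ψ x))

/-- The union of the vertical (upward) rays `{(xᵢ,t) : t ≥ tᵢ}`. -/
def verticalRays {n k : ℕ} (x : Fin k → Eucl n) (t : Fin k → ℝ) : Set (Eucl n × ℝ) :=
  ⋃ i, {q : Eucl n × ℝ | q.1 = x i ∧ t i ≤ q.2}

/-- `p` is the inner linearization of `ψ` built from `k` points `(xᵢ,tᵢ)` of `epi ψ`: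
its epigraph is the convex hull of the union of the vertical rays with those endpoints
(so `p = +∞` outside `conv{x₁,…,x_k}`). -/
def IsInnerLinearization {n : ℕ} (ψ : Eucl n → EReal) (k : ℕ) (p : Eucl n → EReal) : Prop :=
  ∃ (x : Fin k → Eucl n) (t : Fin k → ℝ),
    (∀ i, ψ (x i) ≤ ((t i : ℝ) : EReal)) ∧
    epi p = convexHull ℝ (verticalRays x t)

/-- `𝒫_N(f)`: the set of log affine minorants `exp(−p)` of `f = exp(−ψ)` built from
`k ≤ N` points of `epi ψ` (at most `N` break points). -/
def PN {n : ℕ} (N : ℕ) (f : Eucl n → ℝ) : Set (Eucl n → ℝ) :=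
  {q : Eucl n → ℝ | ∃ k : ℕ, 1 ≤ k ∧ k ≤ N ∧ ∃ p : Eucl n → EReal,
    IsInnerLinearization (fun x => negLog (f x)) k p ∧ ∀ x, q x = expNeg (p x)}

/-- The total mass `J(f) = ∫ f`. -/
def totalMass {n : ℕ} (f : Eucl n → ℝ) : ℝ := ∫ x, f x

/-- `G_{n,N}(f) = min_{p ∈ 𝒫_N(f)} (J(f) − J(p))`. -/
def Gfun {n : ℕ} (N : ℕ) (f : Eucl n → ℝ) : ℝ :=
  sInf {d : ℝ | ∃ q ∈ PN N f, d = totalMass f - totalMass q}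

/-- `g` is the symmetric decreasing rearrangement of `f`: for every `t > 0` the superlevel set
`{g ≥ t}` is the closed Euclidean ball centered at the origin (possibly degenerate or empty)
with the same Lebesgue measure as `{f ≥ t}`. -/
def IsSDR {n : ℕ} (f g : Eucl n → ℝ) : Prop :=
  ∀ t : ℝ, 0 < t →
    ({x : Eucl n | t ≤ g x} = ∅ ∨
      ∃ r : ℝ, 0 ≤ r ∧ {x : Eucl n | t ≤ g x} = closedBall (0 : Eucl n) r) ∧
    volume {x : Eucl n | t ≤ g x} = volume {x : Eucl n | t ≤ f x}

/-- `𝒞_N^in(K)`: polytopes with at most `N` vertices contained in `K`. -/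
def PolyIn {n : ℕ} (N : ℕ) (K : Set (Eucl n)) : Set (Set (Eucl n)) :=
  {P : Set (Eucl n) |
    (∃ S : Finset (Eucl n), S.card ≤ N ∧ P = convexHull ℝ (S : Set (Eucl n))) ∧ P ⊆ K}

lemma expNeg_nonneg (t : EReal) : 0 ≤ expNeg t := by
  unfold expNeg; split
  · exact le_refl 0
  · positivity

lemma expNeg_top : expNeg ⊤ = 0 := by simp [expNeg]

lemma expNeg_zero : expNeg 0 = 1 := by
  simp [expNeg]

lemma expNeg_le_one {t : EReal} (ht : 0 ≤ t) : expNeg t ≤ 1 := by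
  unfold expNeg
  split
  · norm_num
  · next h =>
    push_neg at h
    rw [Real.exp_le_one_iff]
    simp only [neg_nonpos]
    have := EReal.toReal_le_toReal ht (by simp) (by tauto)
    simpa using this

lemma negLog_one : negLog 1 = 0 := by
  simp [negLog]

lemma negLog_zero : negLog 0 = ⊤ := by simp [negLog]

lemma epi_subset_prod {n k : ℕ} {p : Eucl n → EReal} {x : Fin k → Eucl n} {t : Fin k → ℝ}
    (h : epi p = convexHull ℝ (verticalRays x t)) {P : Set (Eucl n)} (hP : Convex ℝ P)
    (hx : ∀ i, x i ∈ P) (ht : ∀ i, 0 ≤ t i) :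
    epi p ⊆ P ×ˢ Ici (0 : ℝ) := by
  rw [h]
  have hconv : Convex ℝ (P ×ˢ Ici (0:ℝ)) := hP.prod (convex_Ici 0)
  refine convexHull_min ?_ hconv
  rintro ⟨a, b⟩ hq
  simp only [verticalRays, mem_iUnion, mem_setOf_eq] at hq
  obtain ⟨i, h1, h2⟩ := hq
  exact ⟨h1 ▸ hx i, le_trans (ht i) h2⟩

lemma exists_real_le_of_ne_top {a : EReal} (ha : a ≠ ⊤) : ∃ r : ℝ, a ≤ (r : EReal) :=
  ⟨a.toReal, EReal.le_coe_toReal ha⟩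

lemma p_nonneg {n : ℕ} {p : Eucl n → EReal} {P : Set (Eucl n)}
    (hsub : epi p ⊆ P ×ˢ Ici (0 : ℝ)) (y : Eucl n) : 0 ≤ p y := by
  by_contra hneg
  push_neg at hneg
  obtain ⟨z, hz1, hz2⟩ := exists_between hneg
  have hzt : z ≠ ⊤ := ne_top_of_lt hz2
  have hzb : z ≠ ⊥ := by
    intro h; rw [h] at hz1; exact not_lt_bot hz1
  have hmem : (y, z.toReal) ∈ epi p := by
    show p y ≤ ((z.toReal : ℝ) : EReal)
    rw [EReal.coe_toReal hzt hzb]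
    exact hz1.le
  have := (hsub hmem).2
  simp only [mem_Ici] at this
  have hz2' : z.toReal < 0 := by
    have := EReal.toReal_le_toReal hz2.le hzb (by simp)
    simp only [EReal.toReal_zero] at this
    rcases lt_or_eq_of_le this with h | h
    · exact h
    · exfalso
      rw [← EReal.coe_toReal hzt hzb, h] at hz2
      simp at hz2
  linarith

lemma p_eq_top {n : ℕ} {p : Eucl n → EReal} {P : Set (Eucl n)}
    (hsub : epi p ⊆ P ×ˢ Ici (0 : ℝ)) {y : Eucl n} (hy : y ∉ P) : p y = ⊤ := by
  by_contra h
  obtain ⟨r, hr⟩ := exists_real_le_of_ne_top h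
  exact hy (hsub (show (y, r) ∈ epi p from hr)).1

lemma convexHull_verticalRays_zero {n k : ℕ} (x : Fin k → Eucl n) :
    convexHull ℝ (verticalRays x (fun _ => (0:ℝ))) =
      (convexHull ℝ (range x)) ×ˢ Ici (0 : ℝ) := by
  apply Subset.antisymm
  · have hconv : Convex ℝ ((convexHull ℝ (range x)) ×ˢ Ici (0:ℝ)) :=
      (convex_convexHull ℝ _).prod (convex_Ici 0)
    refine convexHull_min ?_ hconv
    rintro ⟨a, b⟩ hq
    simp only [verticalRays, mem_iUnion, mem_setOf_eq] at hq
    obtain ⟨i, h1, h2⟩ := hq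
    exact ⟨h1 ▸ subset_convexHull ℝ _ (mem_range_self i), h2⟩
  · rintro ⟨y, r⟩ ⟨hy, hr⟩
    simp only [mem_Ici] at hr
    let g : Eucl n →ᵃ[ℝ] Eucl n × ℝ :=
      { toFun := fun z => (z, r)
        linear := LinearMap.prod LinearMap.id 0
        map_vadd' := by intro p v; simp [Prod.ext_iff] }
    have hg : ∀ z, g z = (z, r) := fun z => rfl
    have himg : g '' (convexHull ℝ (range x)) = convexHull ℝ (g '' (range x)) :=
      AffineMap.image_convexHull _ _
    have hmem : (y, r) ∈ g '' (convexHull ℝ (range x)) := ⟨y, hy, rfl⟩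
    rw [himg] at hmem
    refine convexHull_mono ?_ hmem
    rintro q ⟨z, ⟨i, rfl⟩, rfl⟩
    rw [hg]
    exact mem_iUnion.2 ⟨i, rfl, hr⟩

lemma integral_le_of_le_indicator {n : ℕ} {q : Eucl n → ℝ} {P : Set (Eucl n)}
    (hPm : MeasurableSet P) (hPfin : volume P ≠ ⊤)
    (h0 : ∀ x, 0 ≤ q x) (h1 : ∀ x, q x ≤ P.indicator (fun _ => (1:ℝ)) x) :
    ∫ x, q x ≤ (volume P).toReal := by
  have hind : Integrable (P.indicator (fun _ => (1:ℝ))) := by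
    rw [integrable_indicator_iff hPm]
    exact integrableOn_const hPfin
  have heq : ∫ x, P.indicator (fun _ => (1:ℝ)) x = (volume P).toReal := by
    rw [integral_indicator_const _ hPm]; simp [measureReal_def]
  by_cases hq : Integrable q
  · calc ∫ x, q x ≤ ∫ x, P.indicator (fun _ => (1:ℝ)) x := integral_mono hq hind h1
      _ = _ := heq
  · rw [integral_undef hq]; exact ENNReal.toReal_nonneg

open Classical in
lemma negLog_indicator {n : ℕ} {K : Set (Eucl n)} (x : Eucl n) :
    negLog (K.indicator (fun _ => (1:ℝ)) x) = if x ∈ K then (0:EReal) else ⊤ := by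
  by_cases hx : x ∈ K
  · simp [hx, indicator_of_mem, negLog_one]
  · simp [hx, indicator_of_notMem, negLog_zero]

lemma volume_singleton_eucl {n : ℕ} (hn : 1 ≤ n) (z : Eucl n) :
    volume ({z} : Set (Eucl n)) = 0 := by
  haveI : Nonempty (Fin n) := ⟨⟨0, hn⟩⟩
  haveI : Nontrivial (Eucl n) := inferInstance
  exact measure_singleton z

lemma key_construction {n N : ℕ} {K : Set (Eucl n)} (S : Finset (Eucl n))
    (hSne : S.Nonempty) (hScard : S.card ≤ N) (hSK : (↑S : Set (Eucl n)) ⊆ K) :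
    ∃ q ∈ PN N (K.indicator (fun _ => (1:ℝ))),
      totalMass q = (volume (convexHull ℝ (↑S : Set (Eucl n)))).toReal := by
  classical
  set P := convexHull ℝ (↑S : Set (Eucl n)) with hPdef
  have hPm : MeasurableSet P := (S.finite_toSet.isCompact_convexHull ℝ).isClosed.measurableSet
  set k := S.card with hk
  let e := S.equivFin
  let x : Fin k → Eucl n := fun i => (e.symm i : Eucl n)
  have hrange : range x = (↑S : Set (Eucl n)) := by
    ext z; constructor
    · rintro ⟨i, rfl⟩; exact (e.symm i).2
    · intro hz; exact ⟨e ⟨z, hz⟩, by simp [x]⟩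
  let p : Eucl n → EReal := fun y => if y ∈ P then (0:EReal) else ⊤
  have hepi : epi p = P ×ˢ Ici (0:ℝ) := by
    ext ⟨y, r⟩
    simp only [epi, mem_setOf_eq, mem_prod, mem_Ici, p]
    by_cases hy : y ∈ P
    · simp only [hy, if_true, true_and]
      exact EReal.coe_nonneg
    · simp [hy]
  refine ⟨fun y => expNeg (p y),
    ⟨k, hSne.card_pos, hScard, p, ⟨x, fun _ => 0, ?_, ?_⟩, fun _ => rfl⟩, ?_⟩
  · intro i
    have hxK : x i ∈ K := hSK (by rw [← hrange]; exact mem_range_self i)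
    simp only [negLog_indicator, if_pos hxK]
    exact_mod_cast le_refl (0 : EReal)
  · rw [hepi, convexHull_verticalRays_zero, hrange]
  · have hfun : (fun y => expNeg (p y)) = P.indicator (fun _ => (1:ℝ)) := by
      ext y
      by_cases hy : y ∈ P
      · simp [p, if_pos hy, expNeg_zero, indicator_of_mem, hy]
      · simp [p, if_neg hy, expNeg_top, indicator_of_notMem, hy]
    unfold totalMass
    rw [hfun, integral_indicator_const _ hPm]; simp [measureReal_def]

lemma bound_lemma {n N : ℕ} {K : Set (Eucl n)} (hKconv : Convex ℝ K)
    {q : Eucl n → ℝ} (hq : q ∈ PN N (K.indicator fun _ => (1:ℝ))) :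
    ∃ S : Finset (Eucl n), S.card ≤ N ∧ (convexHull ℝ (↑S : Set (Eucl n))) ⊆ K ∧
      totalMass q ≤ (volume (convexHull ℝ (↑S : Set (Eucl n)))).toReal := by
  classical
  obtain ⟨k, hk1, hkN, p, ⟨x, t, hxt, hepi⟩, hqp⟩ := hq
  have hxK : ∀ i, x i ∈ K := by
    intro i
    have h := hxt i
    simp only [negLog_indicator] at h
    by_contra hxi
    rw [if_neg hxi] at h
    exact (EReal.coe_ne_top (t i)) (top_le_iff.mp h)
  have ht0 : ∀ i, 0 ≤ t i := by
    intro i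
    have h := hxt i
    simp only [negLog_indicator, if_pos (hxK i)] at h
    exact_mod_cast h
  let S : Finset (Eucl n) := Finset.image x Finset.univ
  set P := convexHull ℝ (↑S : Set (Eucl n)) with hPdef
  have hSx : (↑S : Set (Eucl n)) = range x := by
    simp [S]
  have hPK : P ⊆ K :=
    convexHull_min (by rw [hSx]; rintro z ⟨i, rfl⟩; exact hxK i) hKconv
  have hsub : epi p ⊆ P ×ˢ Ici (0:ℝ) :=
    epi_subset_prod hepi (convex_convexHull ℝ _)
      (fun i => subset_convexHull ℝ _ (by rw [hSx]; exact mem_range_self i)) ht0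
  have hPcomp : IsCompact P := S.finite_toSet.isCompact_convexHull ℝ
  have hPm : MeasurableSet P := hPcomp.isClosed.measurableSet
  have hPfin : volume P ≠ ⊤ := hPcomp.measure_lt_top.ne
  have hq0 : ∀ y, 0 ≤ q y := fun y => (hqp y) ▸ expNeg_nonneg _
  have hq1 : ∀ y, q y ≤ P.indicator (fun _ => (1:ℝ)) y := by
    intro y
    rw [hqp y]
    by_cases hy : y ∈ P
    · rw [indicator_of_mem hy]
      exact expNeg_le_one (p_nonneg hsub y)
    · rw [indicator_of_notMem hy, p_eq_top hsub hy, expNeg_top]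
  refine ⟨S, ?_, hPK, integral_le_of_le_indicator hPm hPfin hq0 hq1⟩
  calc S.card ≤ (Finset.univ : Finset (Fin k)).card := Finset.card_image_le
    _ = k := by simp
    _ ≤ N := hkN

theorem Gfun_indicator_eq_polytope_approx
    (n N : ℕ) (hn : 1 ≤ n) (hN : n + 2 ≤ N)
    (K : Set (Eucl n)) (hKc : IsCompact K) (hKconv : Convex ℝ K)
    (hKo : (0 : Eucl n) ∈ interior K) :
    Gfun N (K.indicator fun _ => (1 : ℝ)) =
      sInf ((fun P => (volume (K \ P)).toReal) '' PolyIn N K) := by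
  classical
  set f := K.indicator fun _ => (1:ℝ) with hfdef
  have hKm : MeasurableSet K := hKc.isClosed.measurableSet
  have hKfin : volume K ≠ ⊤ := hKc.measure_lt_top.ne
  have hJf : totalMass f = (volume K).toReal := by
    unfold totalMass
    rw [hfdef, integral_indicator_const _ hKm]; simp [measureReal_def]
  set A := {d : ℝ | ∃ q ∈ PN N f, d = totalMass f - totalMass q} with hA
  set B := ((fun P => (volume (K \ P)).toReal) '' PolyIn N K) with hB
  have h0K : (0:Eucl n) ∈ K := interior_subset hKo
  have hdiff : ∀ P : Set (Eucl n), P ⊆ K → MeasurableSet P →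
      (volume (K \ P)).toReal = (volume K).toReal - (volume P).toReal := by
    intro P hPK hPm
    rw [measure_diff hPK hPm.nullMeasurableSet (ne_top_of_le_ne_top hKfin (measure_mono hPK)),
      ENNReal.toReal_sub_of_le (measure_mono hPK) hKfin]
  have h0S : convexHull ℝ ((↑({0} : Finset (Eucl n))) : Set (Eucl n)) = {0} := by
    rw [Finset.coe_singleton, convexHull_singleton]
  have hBA : B ⊆ A := by
    rintro b ⟨P, ⟨⟨S, hScard, rfl⟩, hPK⟩, rfl⟩
    rcases S.eq_empty_or_nonempty with hS | hS
    · obtain ⟨q, hqPN, hq⟩ := key_construction (K := K) (N := N) ({0} : Finset (Eucl n))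
        (by simp) (by simp only [Finset.card_singleton]; omega)
        (by rw [Finset.coe_singleton]; exact singleton_subset_iff.2 h0K)
      refine ⟨q, hqPN, ?_⟩
      have hPempty : convexHull ℝ ((↑S : Set (Eucl n))) = (∅ : Set (Eucl n)) := by
        rw [hS]; simp
      simp only [hPempty]
      rw [diff_empty, hJf, hq, h0S, volume_singleton_eucl hn]
      simp
    · obtain ⟨q, hqPN, hq⟩ := key_construction (K := K) (N := N) S hS hScard
        (subset_trans (subset_convexHull ℝ _) hPK)
      refine ⟨q, hqPN, ?_⟩
      rw [hq, hJf,
        ← hdiff _ hPK ((S.finite_toSet.isCompact_convexHull ℝ).isClosed.measurableSet)]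
  have hAB : ∀ a ∈ A, ∃ b ∈ B, b ≤ a := by
    rintro a ⟨q, hqPN, rfl⟩
    obtain ⟨S, hScard, hPK, hle⟩ := bound_lemma hKconv hqPN
    set P := convexHull ℝ ((↑S : Set (Eucl n))) with hPdef
    have hPm : MeasurableSet P := (S.finite_toSet.isCompact_convexHull ℝ).isClosed.measurableSet
    refine ⟨(volume (K \ P)).toReal, ⟨P, ⟨⟨S, hScard, rfl⟩, hPK⟩, rfl⟩, ?_⟩
    rw [hdiff P hPK hPm, hJf]
    linarith
  have hBne : B.Nonempty := by
    refine ⟨(volume (K \ convexHull ℝ ((↑({0} : Finset (Eucl n))) : Set (Eucl n)))).toReal,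
      ⟨convexHull ℝ ((↑({0} : Finset (Eucl n))) : Set (Eucl n)),
        ⟨⟨{0}, by simp only [Finset.card_singleton]; omega, rfl⟩, ?_⟩, rfl⟩⟩
    rw [h0S]
    exact singleton_subset_iff.2 h0K
  have hAne : A.Nonempty := ⟨_, hBA hBne.choose_spec⟩
  have hBbdd : BddBelow B := by
    refine ⟨0, ?_⟩
    rintro b ⟨P, _, rfl⟩
    exact ENNReal.toReal_nonneg
  have hAbdd : BddBelow A := by
    refine ⟨0, ?_⟩
    intro a ha
    obtain ⟨b, ⟨P, _, rfl⟩, hba⟩ := hAB a ha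
    exact le_trans ENNReal.toReal_nonneg hba
  show sInf A = sInf B
  apply le_antisymm
  · exact csInf_le_csInf hAbdd hBne hBA
  · refine le_csInf hAne ?_
    intro a ha
    obtain ⟨b, hb, hba⟩ := hAB a ha
    exact le_trans (csInf_le hBbdd hb) hba
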